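/- Let m>0 and let r,e,e',T',r',Ω be real numbers with 2m<r<3m, e>0, e'>0, Ω≥0, and set β=e·(1−2m/r). Assume the causality inequality −β·T'² + r'² + 2√e·√(2m/r)·T'·r' + r²·Ω ≤ 0 and that (T',r',Ω)≠(0,0,0). Then −(m/r²)·β·T'² − (1/2)·β²·(e'/e²)·T'² + (m/r²)·r'² − (m/r)·(e'/e)·r'² + [(2m/r²)·√(2m/r)·√e + β·(e'/e²)·√(2m/r)·√e]·T'·r' + (r−2m)·Ω < 0. -/

import Mathlib

set_option maxHeartbeats 1000000


/-- Pointwise algebraic core of Proposition 1 of the paper: at a point of the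
region `2m < r < 3m`, the causality of the tangent vector forces the radial
acceleration of a causal geodesic of the smoothed Lorentzian-Euclidean
Schwarzschild metric in Gullstrand–Painlevé coordinates to be negative. -/
theorem radial_acceleration_neg
    (m r e e' T' r' Ω β : ℝ) (hm : 0 < m)
    (hr1 : 2 * m < r) (hr2 : r < 3 * m)
    (he : 0 < e) (he' : 0 < e') (hΩ : 0 ≤ Ω)
    (hβ : β = e * (1 - 2 * m / r))
    (hcausal : -β * T' ^ 2 + r' ^ 2
        + 2 * Real.sqrt e * Real.sqrt (2 * m / r) * T' * r' + r ^ 2 * Ω ≤ 0)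
    (hnz : (T', r', Ω) ≠ ((0 : ℝ), (0 : ℝ), (0 : ℝ))) :
    -(m / r ^ 2) * β * T' ^ 2 - (1 / 2) * β ^ 2 * (e' / e ^ 2) * T' ^ 2
      + (m / r ^ 2) * r' ^ 2 - (m / r) * (e' / e) * r' ^ 2
      + ((2 * m / r ^ 2) * Real.sqrt (2 * m / r) * Real.sqrt e
          + β * (e' / e ^ 2) * Real.sqrt (2 * m / r) * Real.sqrt e) * T' * r'
      + (r - 2 * m) * Ω < 0 := by
  have hr0 : 0 < r := by linarith
  set s := Real.sqrt (2 * m / r) with hs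
  set u := Real.sqrt e with hu
  have hs2 : s ^ 2 = 2 * m / r := Real.sq_sqrt (by positivity)
  have hu2 : u ^ 2 = e := Real.sq_sqrt he.le
  have hs0 : 0 < s := Real.sqrt_pos.mpr (by positivity)
  have hu0 : 0 < u := Real.sqrt_pos.mpr he
  have hs1 : s ^ 2 < 1 := by
    rw [hs2]; rw [div_lt_one hr0]; linarith
  have hβ' : β = u ^ 2 * (1 - s ^ 2) := by
    rw [hβ, hu2, hs2]
  have hmv : m = s ^ 2 * r / 2 := by
    rw [hs2]; field_simp
  set C : ℝ := -β * T' ^ 2 + r' ^ 2 + 2 * u * s * T' * r' + r ^ 2 * Ω with hC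
  set Q : ℝ := u * (1 - s ^ 2) * T' - s * r' with hQ
  -- key algebraic identity
  have key : -(m / r ^ 2) * β * T' ^ 2 - (1 / 2) * β ^ 2 * (e' / e ^ 2) * T' ^ 2
      + (m / r ^ 2) * r' ^ 2 - (m / r) * (e' / e) * r' ^ 2
      + ((2 * m / r ^ 2) * s * u + β * (e' / e ^ 2) * s * u) * T' * r'
      + (r - 2 * m) * Ω
      = (m / r ^ 2) * (C - r ^ 2 * Ω) + (r - 2 * m) * Ω
        - (e' / (2 * e)) * Q ^ 2 := by
    rw [hC, hQ, hβ', ← hu2, hmv]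
    field_simp
    ring
  rw [key]
  have hCle : C ≤ 0 := hcausal
  have hQsq : (0 : ℝ) ≤ (e' / (2 * e)) * Q ^ 2 := by positivity
  rcases eq_or_lt_of_le hΩ with hΩ0 | hΩpos
  · -- Ω = 0
    have hΩ0 : Ω = 0 := hΩ0.symm
    have hQne : Q ≠ 0 := by
      intro hQ0
      have hT : T' ≠ 0 := by
        intro hT0
        have hr'0 : r' = 0 := by
          rw [hQ, hT0] at hQ0
          have hsr : s * r' = 0 := by linarith [hQ0]
          rcases mul_eq_zero.mp hsr with h | h
          · exact absurd h hs0.ne'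
          · exact h
        exact hnz (by rw [hT0, hr'0, hΩ0])
      have hsr : s * r' = u * (1 - s ^ 2) * T' := by
        rw [hQ] at hQ0; linarith
      have hCs : s ^ 2 * C ≤ 0 :=
        mul_nonpos_of_nonneg_of_nonpos (sq_nonneg s) hCle
      have hCeq : s ^ 2 * C = u ^ 2 * (1 - s ^ 2) * T' ^ 2 := by
        rw [hC, hβ', hΩ0]
        linear_combination (s * r' + u * (1 - s ^ 2) * T' + 2 * u * s ^ 2 * T') * hsr
      have hpos : 0 < u ^ 2 * (1 - s ^ 2) * T' ^ 2 := by
        have h1s : (0:ℝ) < 1 - s ^ 2 := by linarith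
        positivity
      rw [hCeq] at hCs
      linarith
    have hQpos : 0 < (e' / (2 * e)) * Q ^ 2 := by
      have : 0 < Q ^ 2 := lt_of_le_of_ne (sq_nonneg Q) (Ne.symm (pow_ne_zero 2 hQne))
      positivity
    have h1 : (m / r ^ 2) * (C - r ^ 2 * Ω) ≤ 0 := by
      apply mul_nonpos_of_nonneg_of_nonpos (by positivity)
      rw [hΩ0]; linarith
    have h2 : (r - 2 * m) * Ω = 0 := by rw [hΩ0]; ring
    linarith
  · -- Ω > 0
    have hmr : (0:ℝ) < m / r ^ 2 := by positivity
    have h1 : (m / r ^ 2) * (C - r ^ 2 * Ω) ≤ -(m * Ω) := by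
      have hle : C - r ^ 2 * Ω ≤ -(r ^ 2 * Ω) := by linarith
      calc (m / r ^ 2) * (C - r ^ 2 * Ω) ≤ (m / r ^ 2) * (-(r ^ 2 * Ω)) :=
            mul_le_mul_of_nonneg_left hle hmr.le
        _ = -(m * Ω) := by field_simp
    have h4 : (r - 3 * m) * Ω < 0 := mul_neg_of_neg_of_pos (by linarith) hΩpos
    have h5 : (r - 2 * m) * Ω - m * Ω = (r - 3 * m) * Ω := by ring
    linarith
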